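/- Let M be an n×n symmetric positive definite matrix with λ_min(M) = α and λ_max(M) = β, and F an n×m real matrix with largest singular value σ. For the matrix K = [[M, F],[-Fᵀ, 0]], every complex (non-real) eigenvalue λ of K satisfies α/2 ≤ Re(λ) ≤ β/2 and |Im(λ)| ≤ √(σ² - Re(λ)²) ≤ √(σ² - α²/4); in particular K has no non-real eigenvalues if 2σ < α. -/

import Mathlib

open Matrix

private lemma aux_inner {k : ℕ} (p q : EuclideanSpace ℝ (Fin k)) :
    (inner ℝ p q : ℝ) = ∑ j, p j * q j := by
  simp [PiLp.inner_apply, RCLike.inner_apply, mul_comm]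

private lemma aux_quad {k : ℕ} (A : Matrix (Fin k) (Fin k) ℝ) (hA : A.IsHermitian)
    (u : Fin k → ℝ) :
    (⨅ i, hA.eigenvalues i) * (u ⬝ᵥ u) ≤ u ⬝ᵥ (A *ᵥ u) ∧
      u ⬝ᵥ (A *ᵥ u) ≤ (⨆ i, hA.eigenvalues i) * (u ⬝ᵥ u) := by
  classical
  have hAsymm : Aᵀ = A := by
    ext i j
    simpa using congrFun (congrFun hA i) j
  set b := hA.eigenvectorBasis with hbdef
  set e := hA.eigenvalues with hedef
  let v : EuclideanSpace ℝ (Fin k) := WithLp.toLp 2 u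
  set c : Fin k → ℝ := fun i => (inner ℝ (b i) v : ℝ) with hc
  have hvb : ∀ i, (inner ℝ v (b i) : ℝ) = c i := by
    intro i; rw [real_inner_comm]
  have hbAv : ∀ i, (inner ℝ (b i) (WithLp.toLp 2 (A *ᵥ u) : EuclideanSpace ℝ (Fin k)) : ℝ) = e i * c i := by
    intro i
    rw [aux_inner]
    have h2 : ∑ j, b i j * (WithLp.toLp 2 (A *ᵥ u) : EuclideanSpace ℝ (Fin k)) j = (fun j => b i j) ⬝ᵥ (A *ᵥ u) := rfl
    rw [h2, dotProduct_mulVec, ← mulVec_transpose, hAsymm]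
    have h3 : A *ᵥ (fun j => b i j) = e i • fun j => b i j := hA.mulVec_eigenvectorBasis i
    rw [h3, smul_dotProduct]
    have hci : c i = (fun j => b i j) ⬝ᵥ u := by
      simp only [hc]; rw [aux_inner]; rfl
    rw [hci, smul_eq_mul]
  have hQ : u ⬝ᵥ (A *ᵥ u) = ∑ i, e i * c i ^ 2 := by
    have h1 : u ⬝ᵥ (A *ᵥ u) = (inner ℝ v (WithLp.toLp 2 (A *ᵥ u) : EuclideanSpace ℝ (Fin k)) : ℝ) := by
      rw [aux_inner]; rfl
    rw [h1, ← b.sum_inner_mul_inner v]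
    refine Finset.sum_congr rfl fun i _ => ?_
    rw [hvb, hbAv]; ring
  have hN : u ⬝ᵥ u = ∑ i, c i ^ 2 := by
    have h1 : u ⬝ᵥ u = (inner ℝ v v : ℝ) := by rw [aux_inner]; rfl
    rw [h1, ← b.sum_inner_mul_inner v v]
    refine Finset.sum_congr rfl fun i _ => ?_
    have hbi : (inner ℝ (b i) v : ℝ) = c i := rfl
    rw [hvb, hbi]; ring
  constructor
  · rw [hQ, hN, Finset.mul_sum]
    refine Finset.sum_le_sum fun i _ => ?_
    exact mul_le_mul_of_nonneg_right (ciInf_le (Finite.bddBelow_range e) i) (sq_nonneg _)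
  · rw [hQ, hN, Finset.mul_sum]
    refine Finset.sum_le_sum fun i _ => ?_
    exact mul_le_mul_of_nonneg_right (le_ciSup (Finite.bddAbove_range e) i) (sq_nonneg _)

private lemma aux_adj {k l : ℕ} (A : Matrix (Fin k) (Fin l) ℝ) (u : Fin l → ℂ) (v : Fin k → ℂ) :
    star u ⬝ᵥ ((Aᵀ.map Complex.ofReal) *ᵥ v) = star ((A.map Complex.ofReal) *ᵥ u) ⬝ᵥ v := by
  simp only [dotProduct, mulVec, Pi.star_apply, Matrix.map_apply, transpose_apply,
    Finset.mul_sum, dotProduct]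
  rw [Finset.sum_comm]
  refine Finset.sum_congr rfl fun j _ => ?_
  rw [star_sum, Finset.sum_mul]
  refine Finset.sum_congr rfl fun i _ => ?_
  simp only [star_mul', Complex.star_def, Complex.conj_ofReal]
  ring

private lemma aux_conj {k : ℕ} (u v : Fin k → ℂ) : star u ⬝ᵥ v = star (star v ⬝ᵥ u) := by
  simp only [dotProduct, star_sum, star_mul', star_star, Pi.star_apply]
  exact Finset.sum_congr rfl fun i _ => mul_comm _ _

private lemma aux_self {k : ℕ} (u : Fin k → ℂ) :
    star u ⬝ᵥ u = ((∑ i, Complex.normSq (u i) : ℝ) : ℂ) := by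
  push_cast
  simp only [dotProduct, Pi.star_apply, Complex.star_def]
  refine Finset.sum_congr rfl fun i _ => ?_
  rw [Complex.normSq_eq_conj_mul_self]

private lemma aux_mulVec_apply {k l : ℕ} (A : Matrix (Fin k) (Fin l) ℝ) (v : Fin l → ℂ)
    (i : Fin k) :
    ((A.map Complex.ofReal *ᵥ v) i).re = (A *ᵥ fun j => (v j).re) i ∧
      ((A.map Complex.ofReal *ᵥ v) i).im = (A *ᵥ fun j => (v j).im) i := by
  constructor <;>
  · simp only [mulVec, dotProduct, Matrix.map_apply, Complex.re_sum, Complex.im_sum,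
      Complex.mul_re, Complex.mul_im, Complex.ofReal_re, Complex.ofReal_im]
    refine Finset.sum_congr rfl fun j _ => by ring

private lemma aux_re {k : ℕ} (A : Matrix (Fin k) (Fin k) ℝ) (u : Fin k → ℂ) :
    (star u ⬝ᵥ ((A.map Complex.ofReal) *ᵥ u)).re
      = (fun i => (u i).re) ⬝ᵥ (A *ᵥ fun i => (u i).re)
        + (fun i => (u i).im) ⬝ᵥ (A *ᵥ fun i => (u i).im) := by
  simp only [dotProduct, Pi.star_apply, Complex.re_sum, ← Finset.sum_add_distrib]
  refine Finset.sum_congr rfl fun i _ => ?_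
  have h1 := (aux_mulVec_apply A u i).1
  have h2 := (aux_mulVec_apply A u i).2
  rw [Complex.mul_re, Complex.star_def, Complex.conj_re, Complex.conj_im, h1, h2]
  ring

private lemma aux_norm_mulVec {k l : ℕ} (A : Matrix (Fin k) (Fin l) ℝ) (v : Fin l → ℂ) :
    ∑ i, Complex.normSq ((A.map Complex.ofReal *ᵥ v) i)
      = (A *ᵥ fun j => (v j).re) ⬝ᵥ (A *ᵥ fun j => (v j).re)
        + (A *ᵥ fun j => (v j).im) ⬝ᵥ (A *ᵥ fun j => (v j).im) := by
  simp only [dotProduct, ← Finset.sum_add_distrib, Complex.normSq_apply]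
  refine Finset.sum_congr rfl fun i _ => ?_
  rw [(aux_mulVec_apply A v i).1, (aux_mulVec_apply A v i).2]

private lemma aux_cs {k : ℕ} (u v : Fin k → ℂ) :
    ‖star u ⬝ᵥ v‖
      ≤ Real.sqrt (∑ i, Complex.normSq (u i)) * Real.sqrt (∑ i, Complex.normSq (v i)) := by
  have h := norm_inner_le_norm (𝕜 := ℂ)
    (WithLp.toLp 2 u) (WithLp.toLp 2 v)
  rw [EuclideanSpace.inner_toLp_toLp, dotProduct_comm] at h
  simpa [EuclideanSpace.norm_eq, Complex.sq_norm] using h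

/-- Bounds on the complex (non-real) eigenvalues of `K = [[M, F],[-Fᵀ, 0]]` with `M` SPD:
`α/2 ≤ Re λ ≤ β/2` and `|Im λ| ≤ √(σ² - Re(λ)²) ≤ √(σ² - α²/4)`; moreover there are no
non-real eigenvalues if `2σ < α`. -/
theorem shifted_skew_saddle_point_complex_bounds
    (n m : ℕ)
    (M : Matrix (Fin n) (Fin n) ℝ) (hM : M.PosDef)
    (F : Matrix (Fin n) (Fin m) ℝ)
    (α β σ : ℝ)
    (hα : α = ⨅ i, hM.1.eigenvalues i)
    (hβ : β = ⨆ i, hM.1.eigenvalues i)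
    (hσ : 0 ≤ σ ∧ σ ^ 2 = ⨆ i, (Matrix.isHermitian_conjTranspose_mul_self F).eigenvalues i)
    (K : Matrix (Fin n ⊕ Fin m) (Fin n ⊕ Fin m) ℝ)
    (hK : K = Matrix.fromBlocks M F (-Fᵀ) 0) :
    (∀ lam : ℂ, lam.im ≠ 0 →
      (∃ z : Fin n ⊕ Fin m → ℂ, z ≠ 0 ∧ (K.map Complex.ofReal) *ᵥ z = lam • z) →
      α / 2 ≤ lam.re ∧ lam.re ≤ β / 2 ∧
      |lam.im| ≤ Real.sqrt (σ ^ 2 - lam.re ^ 2) ∧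
      Real.sqrt (σ ^ 2 - lam.re ^ 2) ≤ Real.sqrt (σ ^ 2 - α ^ 2 / 4)) ∧
    (2 * σ < α → ∀ lam : ℂ,
      (∃ z : Fin n ⊕ Fin m → ℂ, z ≠ 0 ∧ (K.map Complex.ofReal) *ᵥ z = lam • z) →
      lam.im = 0) := by
  obtain ⟨hσ0, hσ2⟩ := hσ
  have main : ∀ lam : ℂ, lam.im ≠ 0 →
      (∃ z : Fin n ⊕ Fin m → ℂ, z ≠ 0 ∧ (K.map Complex.ofReal) *ᵥ z = lam • z) →
      α / 2 ≤ lam.re ∧ lam.re ≤ β / 2 ∧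
      |lam.im| ≤ Real.sqrt (σ ^ 2 - lam.re ^ 2) ∧
      Real.sqrt (σ ^ 2 - lam.re ^ 2) ≤ Real.sqrt (σ ^ 2 - α ^ 2 / 4) := by
    rintro lam him ⟨z, hz0, hzeig⟩
    set x : Fin n → ℂ := fun i => z (Sum.inl i) with hxdef
    set y : Fin m → ℂ := fun j => z (Sum.inr j) with hydef
    have hzxy : z = Sum.elim x y := by funext t; cases t <;> rfl
    rw [hK, hzxy, Matrix.fromBlocks_map, Matrix.fromBlocks_mulVec] at hzeig
    have e1 : (M.map Complex.ofReal) *ᵥ x + (F.map Complex.ofReal) *ᵥ y = lam • x := by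
      funext i
      simpa using congrFun hzeig (Sum.inl i)
    have e2 : -((Fᵀ.map Complex.ofReal) *ᵥ x) = lam • y := by
      have hmn : (-Fᵀ).map Complex.ofReal = -(Fᵀ.map Complex.ofReal) := by
        ext i j; simp
      funext j
      have h := congrFun hzeig (Sum.inr j)
      rw [hmn] at h
      simpa [Matrix.neg_mulVec] using h
    set nx : ℝ := ∑ i, Complex.normSq (x i) with hnxdef
    set ny : ℝ := ∑ j, Complex.normSq (y j) with hnydef
    have hnx0 : 0 ≤ nx := Finset.sum_nonneg fun i _ => Complex.normSq_nonneg _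
    have hny0 : 0 ≤ ny := Finset.sum_nonneg fun j _ => Complex.normSq_nonneg _
    have hxx : star x ⬝ᵥ x = (nx : ℂ) := by rw [hnxdef]; exact aux_self x
    have hyy : star y ⬝ᵥ y = (ny : ℂ) := by rw [hnydef]; exact aux_self y
    have s1 : star x ⬝ᵥ ((M.map Complex.ofReal) *ᵥ x) + star x ⬝ᵥ ((F.map Complex.ofReal) *ᵥ y)
        = lam * (nx : ℂ) := by
      have h := congrArg (fun w => star x ⬝ᵥ w) e1
      simp only [dotProduct_add, dotProduct_smul, smul_eq_mul] at h
      rw [h, hxx]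
    have s2 : lam * (ny : ℂ) = -(star ((F.map Complex.ofReal) *ᵥ y) ⬝ᵥ x) := by
      have h := congrArg (fun w => star y ⬝ᵥ w) e2
      simp only [dotProduct_neg, dotProduct_smul, smul_eq_mul] at h
      rw [aux_adj F y x, hyy] at h
      exact h.symm
    have s3 : star x ⬝ᵥ ((F.map Complex.ofReal) *ᵥ y)
        = -((starRingEnd ℂ) lam * (ny : ℂ)) := by
      rw [aux_conj x ((F.map Complex.ofReal) *ᵥ y)]
      have h : star ((F.map Complex.ofReal) *ᵥ y) ⬝ᵥ x = -(lam * (ny : ℂ)) := by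
        linear_combination s2
      rw [h]
      simp [Complex.conj_ofReal]
    have hMsymm : Mᵀ = M := by
      ext i j; simpa using congrFun (congrFun hM.1 i) j
    set Q : ℂ := star x ⬝ᵥ ((M.map Complex.ofReal) *ᵥ x) with hQdef
    have hQim : Q.im = 0 := by
      rw [← Complex.conj_eq_iff_im]
      calc (starRingEnd ℂ) Q = star (star x ⬝ᵥ ((M.map Complex.ofReal) *ᵥ x)) := by rw [hQdef]; rfl
        _ = star ((M.map Complex.ofReal) *ᵥ x) ⬝ᵥ x := (aux_conj _ _).symm
        _ = star x ⬝ᵥ ((Mᵀ.map Complex.ofReal) *ᵥ x) := (aux_adj M x x).symm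
        _ = Q := by rw [hMsymm, hQdef]
    have hstar : Q = lam * (nx : ℂ) + (starRingEnd ℂ) lam * (ny : ℂ) := by
      rw [s3] at s1
      linear_combination s1
    have hIm : lam.im * nx = lam.im * ny := by
      have h := congrArg Complex.im hstar
      simp only [Complex.add_im, Complex.mul_im, Complex.ofReal_re, Complex.ofReal_im,
        Complex.conj_re, Complex.conj_im, hQim, mul_zero, zero_mul, add_zero, zero_add,
        neg_mul] at h
      linarith
    have hxy_eq : nx = ny := mul_left_cancel₀ him hIm
    have hre : Q.re = 2 * lam.re * nx := by
      have h := congrArg Complex.re hstar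
      simp only [Complex.add_re, Complex.mul_re, Complex.ofReal_re, Complex.ofReal_im,
        Complex.conj_re, Complex.conj_im, mul_zero, sub_zero, neg_mul] at h
      rw [h, ← hxy_eq]; ring
    have hnxpos : 0 < nx := by
      rcases lt_or_eq_of_le hnx0 with h | h
      · exact h
      · exfalso
        have hsumx : ∑ i, Complex.normSq (x i) = 0 := by rw [← hnxdef, ← h]
        have hsumy : ∑ j, Complex.normSq (y j) = 0 := by rw [← hnydef, ← hxy_eq, ← h]
        have hx0 : ∀ i, x i = 0 := fun i => Complex.normSq_eq_zero.mp <|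
          (Finset.sum_eq_zero_iff_of_nonneg
            (fun i _ => Complex.normSq_nonneg (x i))).mp hsumx i (Finset.mem_univ i)
        have hy0 : ∀ j, y j = 0 := fun j => Complex.normSq_eq_zero.mp <|
          (Finset.sum_eq_zero_iff_of_nonneg
            (fun j _ => Complex.normSq_nonneg (y j))).mp hsumy j (Finset.mem_univ j)
        apply hz0
        rw [hzxy]
        funext t
        cases t with
        | inl i => simpa using hx0 i
        | inr j => simpa using hy0 j
    have hnypos : 0 < ny := hxy_eq ▸ hnxpos
    have hαpos : 0 < α := by
      have hne : Nonempty (Fin n) := by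
        by_contra h
        rw [not_nonempty_iff] at h
        have : nx = 0 := by rw [hnxdef]; simp
        exact absurd this (ne_of_gt hnxpos)
      obtain ⟨i0, hi0⟩ := exists_eq_ciInf_of_finite (f := fun i => hM.1.eigenvalues i)
      rw [hα, ← hi0]
      exact hM.eigenvalues_pos i0
    have hrx : nx = (fun i => (x i).re) ⬝ᵥ (fun i => (x i).re)
        + (fun i => (x i).im) ⬝ᵥ (fun i => (x i).im) := by
      rw [hnxdef]
      simp only [dotProduct, ← Finset.sum_add_distrib, Complex.normSq_apply]
    have hry : ny = (fun j => (y j).re) ⬝ᵥ (fun j => (y j).re)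
        + (fun j => (y j).im) ⬝ᵥ (fun j => (y j).im) := by
      rw [hnydef]
      simp only [dotProduct, ← Finset.sum_add_distrib, Complex.normSq_apply]
    have hQre : Q.re = (fun i => (x i).re) ⬝ᵥ (M *ᵥ fun i => (x i).re)
        + (fun i => (x i).im) ⬝ᵥ (M *ᵥ fun i => (x i).im) := by
      rw [hQdef]; exact aux_re M x
    have hQlow : α * nx ≤ Q.re := by
      rw [hQre, hrx, hα, mul_add]
      exact add_le_add (aux_quad M hM.1 _).1 (aux_quad M hM.1 _).1
    have hQhigh : Q.re ≤ β * nx := by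
      rw [hQre, hrx, hβ, mul_add]
      exact add_le_add (aux_quad M hM.1 _).2 (aux_quad M hM.1 _).2
    have h2low : α ≤ 2 * lam.re := by
      rw [hre] at hQlow
      exact (mul_le_mul_iff_of_pos_right hnxpos).mp hQlow
    have h2high : 2 * lam.re ≤ β := by
      rw [hre] at hQhigh
      exact (mul_le_mul_iff_of_pos_right hnxpos).mp hQhigh
    -- sigma bound
    have hFu : ∀ u : Fin m → ℝ, (F *ᵥ u) ⬝ᵥ (F *ᵥ u) ≤ σ ^ 2 * (u ⬝ᵥ u) := by
      intro u
      have h := (aux_quad (Fᴴ * F) (isHermitian_conjTranspose_mul_self F) u).2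
      rw [← hσ2] at h
      calc (F *ᵥ u) ⬝ᵥ (F *ᵥ u) = ((F *ᵥ u) ᵥ* F) ⬝ᵥ u := by rw [dotProduct_mulVec]
        _ = ((Fᵀ * F) *ᵥ u) ⬝ᵥ u := by rw [← mulVec_transpose, mulVec_mulVec]
        _ = u ⬝ᵥ ((Fᵀ * F) *ᵥ u) := dotProduct_comm _ _
        _ ≤ σ ^ 2 * (u ⬝ᵥ u) := h
    have hnw : ∑ i, Complex.normSq (((F.map Complex.ofReal) *ᵥ y) i) ≤ σ ^ 2 * ny :=
      calc ∑ i, Complex.normSq (((F.map Complex.ofReal) *ᵥ y) i)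
          = (F *ᵥ fun j => (y j).re) ⬝ᵥ (F *ᵥ fun j => (y j).re)
            + (F *ᵥ fun j => (y j).im) ⬝ᵥ (F *ᵥ fun j => (y j).im) := aux_norm_mulVec F y
        _ ≤ σ ^ 2 * ((fun j => (y j).re) ⬝ᵥ (fun j => (y j).re))
            + σ ^ 2 * ((fun j => (y j).im) ⬝ᵥ (fun j => (y j).im)) :=
            add_le_add (hFu _) (hFu _)
        _ = σ ^ 2 * ny := by rw [hry]; ring
    have habs : ‖lam‖ * ny ≤ σ * ny := by
      have h1 : ‖lam * (ny : ℂ)‖ = ‖lam‖ * ny := by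
        rw [norm_mul, Complex.norm_real, Real.norm_eq_abs, abs_of_nonneg hny0]
      have h2 : ‖lam * (ny : ℂ)‖
          = ‖star ((F.map Complex.ofReal) *ᵥ y) ⬝ᵥ x‖ := by
        rw [s2, norm_neg]
      have h4 : Real.sqrt (∑ i, Complex.normSq (((F.map Complex.ofReal) *ᵥ y) i))
          ≤ σ * Real.sqrt ny := by
        have h5 := Real.sqrt_le_sqrt hnw
        rwa [Real.sqrt_mul (sq_nonneg σ), Real.sqrt_sq hσ0] at h5
      have h6 : Real.sqrt (∑ i, Complex.normSq (x i)) = Real.sqrt ny := by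
        rw [← hnxdef, hxy_eq]
      calc ‖lam‖ * ny = ‖star ((F.map Complex.ofReal) *ᵥ y) ⬝ᵥ x‖ := by
            rw [← h1, h2]
        _ ≤ Real.sqrt (∑ i, Complex.normSq (((F.map Complex.ofReal) *ᵥ y) i))
            * Real.sqrt (∑ i, Complex.normSq (x i)) := aux_cs _ _
        _ ≤ (σ * Real.sqrt ny) * Real.sqrt ny := by
            apply mul_le_mul_of_nonneg_right h4 (Real.sqrt_nonneg _) |>.trans
            rw [h6]
        _ = σ * ny := by rw [mul_assoc, Real.mul_self_sqrt hny0]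
    have habs2 : ‖lam‖ ≤ σ := le_of_mul_le_mul_right habs hnypos
    have hsq : lam.re ^ 2 + lam.im ^ 2 ≤ σ ^ 2 := by
      have h2 : ‖lam‖ ^ 2 = lam.re ^ 2 + lam.im ^ 2 := by
        rw [Complex.sq_norm, Complex.normSq_apply]; ring
      rw [← h2]
      exact pow_le_pow_left₀ (norm_nonneg lam) habs2 2
    have h6 : |lam.im| ≤ Real.sqrt (σ ^ 2 - lam.re ^ 2) := by
      rw [← Real.sqrt_sq_eq_abs]
      exact Real.sqrt_le_sqrt (by linarith)
    have h7 : Real.sqrt (σ ^ 2 - lam.re ^ 2) ≤ Real.sqrt (σ ^ 2 - α ^ 2 / 4) := by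
      apply Real.sqrt_le_sqrt
      have h8 : (α / 2) ^ 2 ≤ lam.re ^ 2 :=
        pow_le_pow_left₀ (by linarith) (by linarith) 2
      nlinarith
    exact ⟨by linarith, by linarith, h6, h7⟩
  refine ⟨main, fun hcond lam hex => ?_⟩
  by_contra him
  obtain ⟨h1, _h2, h3, _h4⟩ := main lam him hex
  have h5 : 0 < Real.sqrt (σ ^ 2 - lam.re ^ 2) := lt_of_lt_of_le (abs_pos.mpr him) h3
  have h7 := Real.sqrt_pos.mp h5
  nlinarith [h7, h1, hσ0, hcond]
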